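/- Let d ≥ 1, let s ∈ ℕ₀, let ρ ≥ 1 be an integer, let f : ℤ^d → ℝ and a ∈ ℤ^d. Define the discrete Taylor polynomial Tay_a^s f(z) := Σ_{α ∈ ℕ₀^d, |α| ≤ s} ∇^α f(a) · b_α(z−a), where b_α(z) := ∏_{j=1}^d C(z_j, α_j) and C(t,k) := t(t−1)⋯(t−k+1)/k! for t ∈ ℤ, k ∈ ℕ₀ (C(t,0) = 1). Set M := max{ |∇^α f(z)| : |α| = s+1, z ∈ a + {0,…,ρ}^d }. Then for every multiindex β ∈ ℕ₀^d with t := |β| ≤ s and every z ∈ a + {0,…,ρ}^d: |∇^β( f − Tay_a^s f )(z)| ≤ M · C(|z−a|₁, s−t+1), where |z−a|₁ = Σ_{j=1}^d |z_j − a_j|. -/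

import Mathlib

open scoped BigOperators

/-- Forward difference in direction `e_i` on `ℤ^d`. -/
def fd1 {d : ℕ} (i : Fin d) (f : (Fin d → ℤ) → ℝ) : (Fin d → ℤ) → ℝ :=
  fun x => f (x + Pi.single i 1) - f x

/-- Iterated forward difference in one direction. -/
def fdPow {d : ℕ} (i : Fin d) : ℕ → ((Fin d → ℤ) → ℝ) → (Fin d → ℤ) → ℝ
  | 0, f => f
  | k + 1, f => fd1 i (fdPow i k f)

/-- Multiindex forward difference `∇^α = ∇₁^{α₁} ⋯ ∇_d^{α_d}`. -/
def fdMulti {d : ℕ} (α : Fin d → ℕ) (f : (Fin d → ℤ) → ℝ) : (Fin d → ℤ) → ℝ :=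
  (List.finRange d).foldr (fun i g => fdPow i (α i) g) f

/-- Generalized binomial coefficient `C(t,k) = t(t−1)⋯(t−k+1)/k!` for `t ∈ ℤ`, `k ∈ ℕ`. -/
noncomputable def ichoose (t : ℤ) (k : ℕ) : ℝ :=
  (∏ j ∈ Finset.range k, ((t : ℝ) - (j : ℝ))) / (Nat.factorial k : ℝ)

/-- The basic polynomials `b_α(z) = ∏_j C(z_j, α_j)`. -/
noncomputable def bpoly {d : ℕ} (α : Fin d → ℕ) (z : Fin d → ℤ) : ℝ :=
  ∏ j, ichoose (z j) (α j)

/-- The discrete Taylor polynomial `Tay_a^s f(z) = ∑_{|α| ≤ s} ∇^α f(a) b_α(z−a)`. -/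
noncomputable def discTaylor {d : ℕ} (s : ℕ) (f : (Fin d → ℤ) → ℝ) (a z : Fin d → ℤ) : ℝ :=
  ∑ α ∈ (Finset.Iic (fun _ : Fin d => s)).filter (fun α => ∑ j, α j ≤ s),
    fdMulti α f a * bpoly α (z - a)

section
variable {d : ℕ}
def D1 (h : ℤ → ℝ) : ℤ → ℝ := fun t => h (t + 1) - h t
def DPow : ℕ → (ℤ → ℝ) → (ℤ → ℝ)
  | 0, h => h
  | k + 1, h => D1 (DPow k h)

def fdMultiL (l : List (Fin d)) (α : Fin d → ℕ) (f : (Fin d → ℤ) → ℝ) : (Fin d → ℤ) → ℝ :=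
  l.foldr (fun i g => fdPow i (α i) g) f

lemma fdMulti_eq_L (α : Fin d → ℕ) (f : (Fin d → ℤ) → ℝ) :
    fdMulti α f = fdMultiL (List.finRange d) α f := rfl

lemma fdMultiL_cons (i : Fin d) (l : List (Fin d)) (α : Fin d → ℕ) (f) :
    fdMultiL (i :: l) α f = fdPow i (α i) (fdMultiL l α f) := rfl

lemma fd1_prod (i : Fin d) (v : Fin d → ℤ → ℝ) :
    fd1 i (fun w => ∏ j, v j (w j))
      = fun w => ∏ j, Function.update v i (D1 (v i)) j (w j) := by
  funext w
  have h1 : ∀ j, (w + (Pi.single i 1 : Fin d → ℤ)) j = w j + (if j = i then 1 else 0) := by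
    intro j; simp [Pi.single_apply]
  simp only [fd1]
  rw [← Finset.prod_erase_mul _ _ (Finset.mem_univ i),
      ← Finset.prod_erase_mul _ _ (Finset.mem_univ i),
      ← Finset.prod_erase_mul _ _ (Finset.mem_univ i)]
  have hp1 : ∏ j ∈ Finset.univ.erase i, v j ((w + (Pi.single i 1 : Fin d → ℤ)) j)
      = ∏ j ∈ Finset.univ.erase i, v j (w j) := by
    refine Finset.prod_congr rfl fun j hj => ?_
    rw [h1, if_neg (Finset.ne_of_mem_erase hj), add_zero]
  have hp2 : ∏ j ∈ Finset.univ.erase i, Function.update v i (D1 (v i)) j (w j)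
      = ∏ j ∈ Finset.univ.erase i, v j (w j) := by
    refine Finset.prod_congr rfl fun j hj => ?_
    rw [Function.update_of_ne (Finset.ne_of_mem_erase hj)]
  rw [hp1, hp2, h1, if_pos rfl, Function.update_self]
  simp only [D1]
  ring

lemma fdPow_prod (i : Fin d) (k : ℕ) (v : Fin d → ℤ → ℝ) :
    fdPow i k (fun w => ∏ j, v j (w j))
      = fun w => ∏ j, Function.update v i (DPow k (v i)) j (w j) := by
  induction k generalizing v with
  | zero =>
    show (fun w : Fin d → ℤ => ∏ j, v j (w j)) = _
    funext w
    refine Finset.prod_congr rfl fun j _ => ?_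
    by_cases h : j = i
    · subst h; rw [Function.update_self]; rfl
    · rw [Function.update_of_ne h]
  | succ k ih =>
    show fd1 i (fdPow i k _) = _
    rw [ih, fd1_prod]
    funext w
    refine Finset.prod_congr rfl fun j _ => ?_
    by_cases h : j = i
    · subst h
      rw [Function.update_self, Function.update_self, Function.update_self]
      rfl
    · rw [Function.update_of_ne h, Function.update_of_ne h, Function.update_of_ne h]

lemma fdMultiL_prod (l : List (Fin d)) (hl : l.Nodup) (β : Fin d → ℕ) (v : Fin d → ℤ → ℝ) :
    fdMultiL l β (fun w => ∏ j, v j (w j))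
      = fun w => ∏ j, (if j ∈ l then DPow (β j) (v j) else v j) (w j) := by
  induction l generalizing v with
  | nil => simp [fdMultiL]
  | cons i l ih =>
    obtain ⟨hil, hnd⟩ := List.nodup_cons.mp hl
    rw [fdMultiL_cons, ih hnd v, fdPow_prod]
    funext w
    refine Finset.prod_congr rfl fun j _ => ?_
    by_cases h : j = i
    · subst h
      rw [Function.update_self, if_neg hil, if_pos (List.mem_cons_self)]
    · rw [Function.update_of_ne h]
      by_cases h2 : j ∈ l
      · rw [if_pos h2, if_pos (List.mem_cons_of_mem _ h2)]
      · rw [if_neg h2, if_neg (by simp [h, h2])]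

lemma fdMulti_prod (β : Fin d → ℕ) (v : Fin d → ℤ → ℝ) :
    fdMulti β (fun w => ∏ j, v j (w j))
      = fun w => ∏ j, DPow (β j) (v j) (w j) := by
  rw [fdMulti_eq_L, fdMultiL_prod _ (List.nodup_finRange d)]
  simp [List.mem_finRange]
-- linearity
lemma fd1_linc (i : Fin d) {ι : Type*} (S : Finset ι) (c : ι → ℝ) (F : ι → (Fin d → ℤ) → ℝ) :
    fd1 i (fun w => ∑ x ∈ S, c x * F x w) = fun w => ∑ x ∈ S, c x * fd1 i (F x) w := by
  funext w
  simp only [fd1, ← Finset.sum_sub_distrib]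
  exact Finset.sum_congr rfl fun x _ => by ring

lemma fdPow_linc (i : Fin d) (k : ℕ) {ι : Type*} (S : Finset ι) (c : ι → ℝ)
    (F : ι → (Fin d → ℤ) → ℝ) :
    fdPow i k (fun w => ∑ x ∈ S, c x * F x w)
      = fun w => ∑ x ∈ S, c x * fdPow i k (F x) w := by
  induction k generalizing F with
  | zero => rfl
  | succ k ih =>
    show fd1 i (fdPow i k _) = _
    rw [ih, fd1_linc]
    rfl

lemma fdMultiL_linc (l : List (Fin d)) (β : Fin d → ℕ) {ι : Type*} (S : Finset ι) (c : ι → ℝ)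
    (F : ι → (Fin d → ℤ) → ℝ) :
    fdMultiL l β (fun w => ∑ x ∈ S, c x * F x w)
      = fun w => ∑ x ∈ S, c x * fdMultiL l β (F x) w := by
  induction l generalizing F with
  | nil => rfl
  | cons i l ih =>
    rw [fdMultiL_cons, ih, fdPow_linc]
    rfl

lemma fdMulti_linc (β : Fin d → ℕ) {ι : Type*} (S : Finset ι) (c : ι → ℝ)
    (F : ι → (Fin d → ℤ) → ℝ) :
    fdMulti β (fun w => ∑ x ∈ S, c x * F x w)
      = fun w => ∑ x ∈ S, c x * fdMulti β (F x) w :=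
  fdMultiL_linc _ _ _ _ _

lemma fd1_sub (i : Fin d) (f g : (Fin d → ℤ) → ℝ) :
    fd1 i (fun w => f w - g w) = fun w => fd1 i f w - fd1 i g w := by
  funext w; simp only [fd1]; ring

lemma fdPow_sub (i : Fin d) (k : ℕ) (f g : (Fin d → ℤ) → ℝ) :
    fdPow i k (fun w => f w - g w) = fun w => fdPow i k f w - fdPow i k g w := by
  induction k generalizing f g with
  | zero => rfl
  | succ k ih =>
    show fd1 i (fdPow i k _) = _
    rw [ih, fd1_sub]
    rfl

lemma fdMultiL_sub (l : List (Fin d)) (β : Fin d → ℕ) (f g : (Fin d → ℤ) → ℝ) :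
    fdMultiL l β (fun w => f w - g w) = fun w => fdMultiL l β f w - fdMultiL l β g w := by
  induction l generalizing f g with
  | nil => rfl
  | cons i l ih =>
    rw [fdMultiL_cons, ih, fdPow_sub]
    rfl

lemma fdMulti_sub (β : Fin d → ℕ) (f g : (Fin d → ℤ) → ℝ) :
    fdMulti β (fun w => f w - g w) = fun w => fdMulti β f w - fdMulti β g w :=
  fdMultiL_sub _ _ _ _

-- commutation
lemma fd1_comm (i j : Fin d) (f : (Fin d → ℤ) → ℝ) :
    fd1 i (fd1 j f) = fd1 j (fd1 i f) := by
  funext x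
  simp only [fd1]
  rw [add_right_comm x (Pi.single j 1) (Pi.single i 1)]
  ring

lemma fdPow_fd1 (i j : Fin d) (k : ℕ) (f : (Fin d → ℤ) → ℝ) :
    fdPow j k (fd1 i f) = fd1 i (fdPow j k f) := by
  induction k with
  | zero => rfl
  | succ k ih =>
    show fd1 j (fdPow j k _) = fd1 i (fd1 j (fdPow j k f))
    rw [ih, fd1_comm]

lemma fdMultiL_fd1 (l : List (Fin d)) (β : Fin d → ℕ) (i : Fin d) (f : (Fin d → ℤ) → ℝ) :
    fdMultiL l β (fd1 i f) = fd1 i (fdMultiL l β f) := by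
  induction l with
  | nil => rfl
  | cons j l ih => rw [fdMultiL_cons, ih, fdPow_fd1, fdMultiL_cons]

lemma fdMultiL_congr (l : List (Fin d)) {α α' : Fin d → ℕ} (h : ∀ j ∈ l, α j = α' j)
    (f : (Fin d → ℤ) → ℝ) : fdMultiL l α f = fdMultiL l α' f := by
  induction l with
  | nil => rfl
  | cons i l ih =>
    rw [fdMultiL_cons, fdMultiL_cons, ih (fun j hj => h j (List.mem_cons_of_mem _ hj)),
      h i (List.mem_cons_self)]

lemma fdMultiL_single_add (l : List (Fin d)) (hl : l.Nodup) (i : Fin d) (hi : i ∈ l)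
    (β : Fin d → ℕ) (f : (Fin d → ℤ) → ℝ) :
    fdMultiL l (β + Pi.single i 1) f = fdMultiL l β (fd1 i f) := by
  induction l with
  | nil => simp at hi
  | cons j l ih =>
    obtain ⟨hjl, hnd⟩ := List.nodup_cons.mp hl
    by_cases h : j = i
    · subst h
      have hjl' : ∀ k ∈ l, (β + (Pi.single j 1 : Fin d → ℕ)) k = β k := by
        intro k hk
        have : k ≠ j := fun h => hjl (h ▸ hk)
        simp [Pi.single_apply, this]
      rw [fdMultiL_cons, fdMultiL_cons, fdMultiL_congr l hjl' f]
      have : (β + (Pi.single j 1 : Fin d → ℕ)) j = β j + 1 := by simp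
      rw [this, fdMultiL_fd1]
      show fd1 j (fdPow j (β j) (fdMultiL l β f)) = fdPow j (β j) (fd1 j (fdMultiL l β f))
      rw [fdPow_fd1]
    · have hi' : i ∈ l := by
        rcases List.mem_cons.mp hi with h' | h'
        · exact absurd h'.symm h
        · exact h'
      rw [fdMultiL_cons, fdMultiL_cons, ih hnd hi']
      have : (β + (Pi.single i 1 : Fin d → ℕ)) j = β j := by simp [Pi.single_apply, h]
      rw [this]

lemma fdMulti_single_add (i : Fin d) (β : Fin d → ℕ) (f : (Fin d → ℤ) → ℝ) :
    fdMulti (β + Pi.single i 1) f = fd1 i (fdMulti β f) := by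
  rw [fdMulti_eq_L, fdMulti_eq_L,
    fdMultiL_single_add _ (List.nodup_finRange d) i (List.mem_finRange i), fdMultiL_fd1]


lemma ichoose_zero_right (t : ℤ) : ichoose t 0 = 1 := by simp [ichoose]

lemma ichoose_zero_left (k : ℕ) : ichoose 0 (k + 1) = 0 := by
  unfold ichoose
  rw [Finset.prod_eq_zero (Finset.mem_range.mpr (Nat.succ_pos k)) (by norm_num)]
  simp

lemma ichoose_zero_eq (m : ℕ) : ichoose 0 m = if m = 0 then 1 else 0 := by
  cases m with
  | zero => simp [ichoose_zero_right]
  | succ m => simp [ichoose_zero_left]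

lemma ichoose_pascal (t : ℤ) (m : ℕ) :
    ichoose (t + 1) (m + 1) = ichoose t (m + 1) + ichoose t m := by
  unfold ichoose
  have h1 : ∏ j ∈ Finset.range (m + 1), (((t + 1 : ℤ) : ℝ) - (j : ℝ))
      = (∏ j ∈ Finset.range m, ((t : ℝ) - (j : ℝ))) * ((t : ℝ) + 1) := by
    rw [Finset.prod_range_succ']
    push_cast
    congr 1
    · exact Finset.prod_congr rfl fun j _ => by ring
    · ring
  have h2 : ∏ j ∈ Finset.range (m + 1), ((t : ℝ) - (j : ℝ))
      = (∏ j ∈ Finset.range m, ((t : ℝ) - (j : ℝ))) * ((t : ℝ) - m) := by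
    rw [Finset.prod_range_succ]
  rw [h1, h2, Nat.factorial_succ]
  have hm : (Nat.factorial m : ℝ) ≠ 0 := Nat.cast_ne_zero.mpr (Nat.factorial_ne_zero m)
  have hm1 : ((m : ℝ) + 1) ≠ 0 := by positivity
  field_simp
  push_cast
  ring

lemma DPow_ichoose (c : ℤ) (m k : ℕ) :
    DPow k (fun t => ichoose (t - c) m)
      = fun t => if k ≤ m then ichoose (t - c) (m - k) else 0 := by
  induction k with
  | zero => simp [DPow]
  | succ k ih =>
    show D1 (DPow k _) = _
    rw [ih]
    funext t
    by_cases hkm : k ≤ m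
    · rcases Nat.lt_or_ge k m with h | h
      · have he : m - k = (m - (k + 1)) + 1 := by omega
        simp only [D1, if_pos hkm, if_pos (by omega : k + 1 ≤ m), he]
        have h2 : t + 1 - c = (t - c) + 1 := by ring
        rw [h2, ichoose_pascal]; ring
      · have hk : k = m := le_antisymm hkm h
        have hmk : m - k = 0 := by omega
        simp only [D1, if_pos hkm, hmk, if_neg (by omega : ¬ k + 1 ≤ m),
          ichoose_zero_right]
        ring
    · simp only [D1, if_neg hkm, if_neg (by omega : ¬ k + 1 ≤ m)]
      ring

lemma fdMulti_taylor_term (a : Fin d → ℤ) (α β : Fin d → ℕ) :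
    fdMulti β (fun w => bpoly α (w - a))
      = fun z => ∏ j, (if β j ≤ α j then ichoose (z j - a j) (α j - β j) else 0) := by
  have h : (fun w : Fin d → ℤ => bpoly α (w - a))
      = fun w => ∏ j, (fun t => ichoose (t - a j) (α j)) (w j) := by
    funext w
    exact Finset.prod_congr rfl fun j _ => by rw [Pi.sub_apply]
  have h3 : fdMulti β (fun w => bpoly α (w - a))
      = fun w => ∏ j, DPow (β j) (fun t => ichoose (t - a j) (α j)) (w j) := by
    rw [h]; exact fdMulti_prod β (fun j t => ichoose (t - a j) (α j))
  rw [h3]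
  funext z
  refine Finset.prod_congr rfl fun j _ => ?_
  rw [DPow_ichoose]

lemma fdMulti_discTaylor (s : ℕ) (f : (Fin d → ℤ) → ℝ) (a : Fin d → ℤ) (β : Fin d → ℕ) :
    fdMulti β (fun w => discTaylor s f a w)
      = fun z => ∑ α ∈ (Finset.Iic fun _ : Fin d => s).filter (fun α => ∑ j, α j ≤ s),
          fdMulti α f a * ∏ j, (if β j ≤ α j then ichoose (z j - a j) (α j - β j) else 0) := by
  have h0 : (fun w => discTaylor s f a w)
      = fun w => ∑ α ∈ (Finset.Iic fun _ : Fin d => s).filter (fun α => ∑ j, α j ≤ s),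
          (fun α => fdMulti α f a) α * (fun (α : Fin d → ℕ) (w : Fin d → ℤ) => bpoly α (w - a)) α w := rfl
  rw [h0, fdMulti_linc]
  funext z
  refine Finset.sum_congr rfl fun α _ => ?_
  have := congrFun (fdMulti_taylor_term a α β) z
  rw [this]

lemma mem_taylor_set {s : ℕ} (β : Fin d → ℕ) (hβ : ∑ j, β j ≤ s) :
    β ∈ (Finset.Iic fun _ : Fin d => s).filter (fun α => ∑ j, α j ≤ s) := by
  refine Finset.mem_filter.mpr ⟨Finset.mem_Iic.mpr ?_, hβ⟩
  intro j
  exact le_trans (Finset.single_le_sum (f := β) (fun i _ => Nat.zero_le _) (Finset.mem_univ j)) hβ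

lemma fdMulti_discTaylor_at_a (s : ℕ) (f : (Fin d → ℤ) → ℝ) (a : Fin d → ℤ)
    (β : Fin d → ℕ) (hβ : ∑ j, β j ≤ s) :
    fdMulti β (fun w => discTaylor s f a w) a = fdMulti β f a := by
  have h := congrFun (fdMulti_discTaylor s f a β) a
  rw [h]
  have hterm : ∀ α : Fin d → ℕ,
      (∏ j, (if β j ≤ α j then ichoose (a j - a j) (α j - β j) else 0))
        = if α = β then (1 : ℝ) else 0 := by
    intro α
    have hj : ∀ j : Fin d, (if β j ≤ α j then ichoose (a j - a j) (α j - β j) else 0)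
        = if α j = β j then (1 : ℝ) else 0 := by
      intro j
      rw [sub_self]
      by_cases h : β j ≤ α j
      · rw [if_pos h, ichoose_zero_eq]
        by_cases h2 : α j = β j
        · rw [if_pos (by omega), if_pos h2]
        · rw [if_neg (by omega), if_neg h2]
      · rw [if_neg h, if_neg (by omega)]
    rw [Finset.prod_congr rfl fun j _ => hj j, Finset.prod_boole]
    by_cases hab : α = β
    · subst hab; simp
    · rw [if_neg, if_neg hab]
      intro hc
      exact hab (funext fun j => hc j (Finset.mem_univ j))
  calc (∑ α ∈ (Finset.Iic fun _ : Fin d => s).filter (fun α => ∑ j, α j ≤ s),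
        fdMulti α f a * ∏ j, (if β j ≤ α j then ichoose (a j - a j) (α j - β j) else 0))
      = ∑ α ∈ (Finset.Iic fun _ : Fin d => s).filter (fun α => ∑ j, α j ≤ s),
          (if α = β then fdMulti α f a else 0) := by
        refine Finset.sum_congr rfl fun α _ => ?_
        rw [hterm α]
        by_cases hab : α = β
        · rw [if_pos hab, if_pos hab, mul_one]
        · rw [if_neg hab, if_neg hab, mul_zero]
    _ = fdMulti β f a := by
        rw [Finset.sum_ite_eq' _ β _, if_pos (mem_taylor_set β hβ)]

lemma fdMulti_discTaylor_top (s : ℕ) (f : (Fin d → ℤ) → ℝ) (a : Fin d → ℤ)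
    (γ : Fin d → ℕ) (hγ : s + 1 ≤ ∑ j, γ j) (z : Fin d → ℤ) :
    fdMulti γ (fun w => discTaylor s f a w) z = 0 := by
  have h := congrFun (fdMulti_discTaylor s f a γ) z
  rw [h]
  refine Finset.sum_eq_zero fun α hα => ?_
  obtain ⟨-, hαs⟩ := Finset.mem_filter.mp hα
  have hex : ∃ j, ¬ γ j ≤ α j := by
    by_contra hc
    push_neg at hc
    have h5 : (∑ j, γ j) ≤ ∑ j, α j := Finset.sum_le_sum fun j _ => hc j
    omega
  obtain ⟨j, hj⟩ := hex
  have hz0 : (∏ j, if γ j ≤ α j then ichoose (z j - a j) (α j - γ j) else (0:ℝ)) = 0 :=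
    Finset.prod_eq_zero (Finset.mem_univ j) (if_neg hj)
  rw [hz0, mul_zero]
end

/-- Discrete Taylor remainder estimate: if `M` bounds `|∇^α f|` on `a + {0,…,ρ}^d` for all
`|α| = s+1`, then for every `β` with `t = |β| ≤ s` and every `z ∈ a + {0,…,ρ}^d`,
`|∇^β(f − Tay_a^s f)(z)| ≤ M · C(|z−a|₁, s−t+1)`. -/
theorem stmt15 (d s ρ : ℕ) (hd : 1 ≤ d) (hρ : 1 ≤ ρ)
    (f : (Fin d → ℤ) → ℝ) (a : Fin d → ℤ) (M : ℝ)
    (hM : ∀ α : Fin d → ℕ, (∑ j, α j) = s + 1 →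
      ∀ z ∈ Finset.Icc a (fun j => a j + (ρ : ℤ)), |fdMulti α f z| ≤ M) :
    ∀ β : Fin d → ℕ, (∑ j, β j) ≤ s →
      ∀ z ∈ Finset.Icc a (fun j => a j + (ρ : ℤ)),
        |fdMulti β (fun w => f w - discTaylor s f a w) z|
          ≤ M * ichoose (∑ j, ((z j - a j).natAbs : ℤ)) (s - (∑ j, β j) + 1) := by
  have key : ∀ n : ℕ, ∀ β : Fin d → ℕ, (∑ j, β j) ≤ s →
      ∀ z ∈ Finset.Icc a (fun j => a j + (ρ : ℤ)), (∑ j, (z j - a j)) = (n : ℤ) →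
        |fdMulti β (fun w => f w - discTaylor s f a w) z|
          ≤ M * ichoose (n : ℤ) (s - (∑ j, β j) + 1) := by
    intro n
    induction n with
    | zero =>
      intro β hβ z hz hsum
      have hge : ∀ j, a j ≤ z j := fun j => (Finset.mem_Icc.mp hz).1 j
      have hzero : ∀ j ∈ Finset.univ, z j - a j = 0 := by
        rw [← Finset.sum_eq_zero_iff_of_nonneg (fun j _ => sub_nonneg.mpr (hge j))]
        exact_mod_cast hsum
      have hza : z = a := funext fun j => by have := hzero j (Finset.mem_univ j); omega
      rw [hza, congrFun (fdMulti_sub β f (fun w => discTaylor s f a w)) a,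
        fdMulti_discTaylor_at_a s f a β hβ, sub_self, abs_zero, Nat.cast_zero,
        ichoose_zero_left, mul_zero]
    | succ n ih =>
      intro β hβ z hz hsum
      obtain ⟨hza, hzb⟩ := Finset.mem_Icc.mp hz
      have hge : ∀ j, a j ≤ z j := fun j => hza j
      have hle : ∀ j, z j ≤ a j + (ρ : ℤ) := fun j => hzb j
      have hex : ∃ i, a i < z i := by
        by_contra hc
        push_neg at hc
        have h0 : ∀ j ∈ Finset.univ, z j - a j = 0 := fun j _ => by
          have := hge j; have := hc j; omega
        rw [Finset.sum_eq_zero h0] at hsum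
        omega
      obtain ⟨i, hi⟩ := hex
      obtain ⟨z', hz'j⟩ : ∃ z' : Fin d → ℤ, ∀ j, z' j = z j - (if j = i then 1 else 0) :=
        ⟨z - Pi.single i 1, fun j => by simp [Pi.single_apply]⟩
      have hz'e : z = z' + Pi.single i 1 := by
        funext j
        have h1 := hz'j j
        by_cases h : j = i
        · subst h
          simp only [Pi.add_apply, Pi.single_apply, if_pos rfl] at h1 ⊢
          omega
        · simp only [Pi.add_apply, Pi.single_apply, if_neg h] at h1 ⊢
          omega
      have hz'mem : z' ∈ Finset.Icc a (fun j => a j + (ρ : ℤ)) := by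
        have hm1 : a ≤ z' := by
          intro j
          show a j ≤ z' j
          have h1 := hz'j j; have h2 := hge j
          by_cases h : j = i
          · subst h; rw [if_pos rfl] at h1; omega
          · rw [if_neg h] at h1; omega
        have hm2 : z' ≤ fun j => a j + (ρ : ℤ) := by
          intro j
          show z' j ≤ a j + (ρ : ℤ)
          have h1 := hz'j j; have h2 := hle j
          by_cases h : j = i
          · subst h; rw [if_pos rfl] at h1; omega
          · rw [if_neg h] at h1; omega
        exact Finset.mem_Icc.mpr ⟨hm1, hm2⟩
      have hsum' : (∑ j, (z' j - a j)) = (n : ℤ) := by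
        have hs : ∑ j, (z' j - a j)
            = (∑ j, (z j - a j)) - ∑ j : Fin d, (if j = i then (1:ℤ) else 0) := by
          rw [← Finset.sum_sub_distrib]
          exact Finset.sum_congr rfl fun j _ => by rw [hz'j]; ring
        rw [hs, hsum, Finset.sum_ite_eq' Finset.univ i (fun _ => (1:ℤ)),
          if_pos (Finset.mem_univ i)]
        push_cast; ring
      have hβ' : ∑ j, (β + Pi.single i 1 : Fin d → ℕ) j = (∑ j, β j) + 1 := by
        simp only [Pi.add_apply, Finset.sum_add_distrib]
        congr 1
        rw [Finset.sum_congr rfl (fun j _ => Pi.single_apply i 1 j),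
          Finset.sum_ite_eq' Finset.univ i (fun _ => (1:ℕ)), if_pos (Finset.mem_univ i)]
      have hsplit : fdMulti β (fun w => f w - discTaylor s f a w) z
          = fdMulti β (fun w => f w - discTaylor s f a w) z'
            + fdMulti (β + Pi.single i 1) (fun w => f w - discTaylor s f a w) z' := by
        rw [fdMulti_single_add]
        show _ = _ + (fdMulti β (fun w => f w - discTaylor s f a w) (z' + Pi.single i 1)
          - fdMulti β (fun w => f w - discTaylor s f a w) z')
        rw [← hz'e]; ring
      have h2 : |fdMulti (β + Pi.single i 1) (fun w => f w - discTaylor s f a w) z'|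
          ≤ M * ichoose (n : ℤ) (s - (∑ j, β j)) := by
        rcases Nat.lt_or_ge (∑ j, β j) s with hts | hts
        · have hb := ih (β + Pi.single i 1) (by rw [hβ']; omega) z' hz'mem hsum'
          rw [hβ'] at hb
          have he : s - ((∑ j, β j) + 1) + 1 = s - (∑ j, β j) := by omega
          rwa [he] at hb
        · have hts' : (∑ j, β j) = s := le_antisymm hβ hts
          have htop : fdMulti (β + Pi.single i 1) (fun w => f w - discTaylor s f a w) z'
              = fdMulti (β + Pi.single i 1) f z' := by
            rw [congrFun (fdMulti_sub (β + Pi.single i 1) f (fun w => discTaylor s f a w)) z',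
              fdMulti_discTaylor_top s f a _ (by rw [hβ']; omega) z', sub_zero]
          rw [htop]
          have hb := hM (β + Pi.single i 1) (by rw [hβ']; omega) z' hz'mem
          have h0 : s - (∑ j, β j) = 0 := by omega
          rw [h0, ichoose_zero_right, mul_one]
          exact hb
      have h1 : |fdMulti β (fun w => f w - discTaylor s f a w) z'|
          ≤ M * ichoose (n : ℤ) (s - (∑ j, β j) + 1) := ih β hβ z' hz'mem hsum'
      rw [hsplit]
      refine le_trans (abs_add_le _ _) (le_trans (add_le_add h1 h2) ?_)
      have hp : ichoose ((n : ℤ) + 1) ((s - (∑ j, β j)) + 1)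
          = ichoose (n : ℤ) ((s - (∑ j, β j)) + 1) + ichoose (n : ℤ) (s - (∑ j, β j)) :=
        ichoose_pascal (n : ℤ) (s - (∑ j, β j))
      have hc : ((n + 1 : ℕ) : ℤ) = (n : ℤ) + 1 := by push_cast; ring
      rw [hc, hp, mul_add]
  intro β hβ z hz
  have hge : ∀ j, a j ≤ z j := fun j => (Finset.mem_Icc.mp hz).1 j
  have hcast : (∑ j, ((z j - a j).natAbs : ℤ)) = ∑ j, (z j - a j) :=
    Finset.sum_congr rfl fun j _ => Int.natAbs_of_nonneg (sub_nonneg.mpr (hge j))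
  have hnn : (∑ j, (z j - a j)) = (((∑ j, (z j - a j)).toNat : ℕ) : ℤ) :=
    (Int.toNat_of_nonneg (Finset.sum_nonneg fun j _ => sub_nonneg.mpr (hge j))).symm
  rw [hcast, hnn]
  exact key _ β hβ z hz hnn
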